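/- (Proposition 1, part 1: equality of marginal densities.) Let a > 0, b > 0, φ > 0. For every real θ, ∫₀¹ normalPDF(0, 1/ρ − 1)(θ) · f(ρ; a, b, φ) dρ = ∫₀^∞ ∫₀^∞ normalPDF(0, τ)(θ) · gammaPDF(a, λ)(τ) · gammaPDF(b, φ)(λ) dλ dτ. That is, the TPB normal scale mixture TPBN(a, b, φ) has the same marginal density on θ as the hierarchy θ | τ ~ N(0, τ), τ ~ Gamma(a, λ), λ ~ Gamma(b, φ). -/

import Mathlib

open MeasureTheory Real

/-- The three-parameter beta (TPB) density with parameters `a`, `b`, `φ`. -/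
noncomputable def tpb (a b φ x : ℝ) : ℝ :=
  (Real.Gamma (a + b) / (Real.Gamma a * Real.Gamma b)) * φ ^ b * x ^ (b - 1) *
    (1 - x) ^ (a - 1) * (1 + (φ - 1) * x) ^ (-(a + b))

/-- The Gamma density with shape `μ` and rate `ν`, for positive arguments. -/
noncomputable def gammaPDF (μ ν x : ℝ) : ℝ :=
  ν ^ μ * x ^ (μ - 1) * Real.exp (-ν * x) / Real.Gamma μ

/-- The centered normal density with variance `v`. -/
noncomputable def normalPDF (v θ : ℝ) : ℝ :=
  (2 * Real.pi * v) ^ (-(1 : ℝ) / 2) * Real.exp (-θ ^ 2 / (2 * v))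

/-- Proposition 1, part 1: the TPB normal scale mixture TPBN(a, b, φ) has the same marginal
density on θ as the hierarchy θ | τ ~ N(0, τ), τ ~ Gamma(a, λ), λ ~ Gamma(b, φ). -/
theorem tpbn_marginal_eq_gamma_gamma_marginal (a b φ : ℝ) (ha : 0 < a) (hb : 0 < b)
    (hφ : 0 < φ) (θ : ℝ) :
    ∫ ρ in Set.Ioo (0 : ℝ) 1, normalPDF (1 / ρ - 1) θ * tpb a b φ ρ =
      ∫ τ in Set.Ioi (0 : ℝ), ∫ l in Set.Ioi (0 : ℝ),
        normalPDF τ θ * gammaPDF a l τ * gammaPDF b φ l := by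
  have hGa := Real.Gamma_pos_of_pos ha
  have hGb := Real.Gamma_pos_of_pos hb
  -- Step 1: compute the inner integral on the RHS
  have key : ∀ τ : ℝ, 0 < τ →
      (∫ l in Set.Ioi (0:ℝ), normalPDF τ θ * gammaPDF a l τ * gammaPDF b φ l)
      = normalPDF τ θ * ((Real.Gamma (a+b) / (Real.Gamma a * Real.Gamma b)) * φ ^ b *
          τ ^ (a-1) * (τ+φ) ^ (-(a+b))) := by
    intro τ hτ
    have hτφ : (0:ℝ) < τ + φ := by linarith
    have h1 : ∀ l ∈ Set.Ioi (0:ℝ),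
        normalPDF τ θ * gammaPDF a l τ * gammaPDF b φ l
        = (normalPDF τ θ * τ ^ (a-1) * φ ^ b / (Real.Gamma a * Real.Gamma b)) *
            (l ^ (a + b - 1) * Real.exp (-((τ+φ) * l))) := by
      intro l hl
      have hl0 : (0:ℝ) < l := hl
      simp only [gammaPDF]
      rw [show l ^ (a+b-1) = l ^ a * l ^ (b-1) by
        rw [← Real.rpow_add hl0]; ring_nf]
      rw [show Real.exp (-((τ+φ)*l)) = Real.exp (-l*τ) * Real.exp (-φ*l) by
        rw [← Real.exp_add]; ring_nf]
      field_simp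
    rw [setIntegral_congr_fun measurableSet_Ioi h1, MeasureTheory.integral_const_mul,
      integral_rpow_mul_exp_neg_mul_Ioi (by positivity) hτφ]
    rw [one_div, Real.inv_rpow hτφ.le, ← Real.rpow_neg hτφ.le]
    field_simp
  -- Step 2: change of variables ρ = (1+τ)⁻¹ on the LHS
  have himg : (fun τ : ℝ => (1+τ)⁻¹) '' Set.Ioi 0 = Set.Ioo 0 1 := by
    ext y
    constructor
    · rintro ⟨τ, hτ, rfl⟩
      have hτ0 : (0:ℝ) < τ := hτ
      refine ⟨by positivity, ?_⟩
      rw [inv_lt_one₀ (by linarith)]; linarith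
    · rintro ⟨hy0, hy1⟩
      refine ⟨y⁻¹ - 1, ?_, ?_⟩
      · have : (1:ℝ) < y⁻¹ := (one_lt_inv₀ hy0).mpr hy1
        simpa using this
      · simp only
        rw [show 1 + (y⁻¹ - 1) = y⁻¹ by ring, inv_inv]
  have hderiv : ∀ τ ∈ Set.Ioi (0:ℝ), HasDerivWithinAt (fun τ : ℝ => (1+τ)⁻¹)
      (-(1 / (1+τ)^2)) (Set.Ioi 0) τ := by
    intro τ hτ
    have hτ0 : (0:ℝ) < τ := hτ
    have h : HasDerivAt (fun τ : ℝ => 1+τ) 1 τ := (hasDerivAt_id τ).const_add 1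
    have h2 := (h.inv (by positivity : (1:ℝ)+τ ≠ 0)).hasDerivWithinAt (s := Set.Ioi 0)
    exact h2.congr_deriv (by ring)
  have hinj : Set.InjOn (fun τ : ℝ => (1+τ)⁻¹) (Set.Ioi 0) := by
    intro x hx y hy h
    have hx' : (0:ℝ) < 1 + x := by have : (0:ℝ) < x := hx; linarith
    have hy' : (0:ℝ) < 1 + y := by have : (0:ℝ) < y := hy; linarith
    simp only at h
    field_simp at h
    linarith
  rw [← himg, MeasureTheory.integral_image_eq_integral_abs_deriv_smul measurableSet_Ioi
    hderiv hinj]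
  refine setIntegral_congr_fun measurableSet_Ioi ?_
  intro τ hτ
  dsimp only
  have hτ0 : (0:ℝ) < τ := hτ
  have hu : (0:ℝ) < 1 + τ := by linarith
  have hτφ : (0:ℝ) < τ + φ := by linarith
  rw [key τ hτ0]
  have h1 : (1:ℝ)/(1+τ)⁻¹ - 1 = τ := by
    rw [one_div, inv_inv]; ring
  have h2 : 1 - (1+τ)⁻¹ = τ/(1+τ) := by field_simp; ring
  have h3 : 1 + (φ-1)*(1+τ)⁻¹ = (τ+φ)/(1+τ) := by field_simp; ring
  simp only [smul_eq_mul, tpb, h1, h2, h3]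
  rw [abs_neg, abs_of_pos (by positivity)]
  rw [Real.div_rpow hτ0.le hu.le, Real.div_rpow hτφ.le hu.le,
    Real.inv_rpow hu.le]
  have hA : ((1+τ:ℝ) ^ (b-1)) ≠ 0 := (Real.rpow_pos_of_pos hu _).ne'
  have hB : ((1+τ:ℝ) ^ (a-1)) ≠ 0 := (Real.rpow_pos_of_pos hu _).ne'
  have hC : ((1+τ:ℝ) ^ (-(a+b))) ≠ 0 := (Real.rpow_pos_of_pos hu _).ne'
  have hpow : ((1+τ:ℝ) ^ (b-1))⁻¹ * ((1+τ:ℝ) ^ (a-1))⁻¹ * ((1+τ:ℝ) ^ (-(a+b)))⁻¹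
      = (1+τ)^2 := by
    rw [← Real.rpow_neg hu.le, ← Real.rpow_neg hu.le, ← Real.rpow_neg hu.le,
      ← Real.rpow_add hu, ← Real.rpow_add hu,
      show -(b-1) + -(a-1) + -(-(a+b)) = ((2:ℕ):ℝ) by push_cast; ring,
      Real.rpow_natCast]
  field_simp at hpow ⊢
  linear_combination normalPDF τ θ * hpow
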